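/- Let 𝒩 > 0, 𝒬 > 0 and N_v be real numbers with 𝒩 ≠ 𝒬 and N_v + 1 > 0. Define F(L, R, λ) = 𝒩/(N_v − R + 1) + L − 1 + λ·(L·R − 𝒬) for real L, R, λ with R ≠ N_v + 1. Then a point (L, R, λ) with R ≠ N_v + 1 satisfies ∂F/∂L = ∂F/∂R = ∂F/∂λ = 0 if and only if it equals one of the two points: (L₁, R₁, −1/R₁) with R₁ = √𝒬·(N_v + 1)/(√𝒩 + √𝒬) and L₁ = √𝒬·(√𝒩 + √𝒬)/(N_v + 1); or (L₂, R₂, −1/R₂) with R₂ = √𝒬·(N_v + 1)/(√𝒬 − √𝒩) and L₂ = √𝒬·(√𝒬 − √𝒩)/(N_v + 1). (This is the stationary-point computation of the Lagrange function in the proof of Proposition 1, Eqs. (78)–(80), identifying the extreme points of the pencil-size constraint.) -/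

import Mathlib

set_option maxHeartbeats 1000000


/-- **Stationary points of the Lagrange function** (proof of Proposition 1,
Eqs. (78)–(80)). For `F(L,R,λ) = 𝒩/(N_v − R + 1) + L − 1 + λ(LR − 𝒬)` with
`𝒩, 𝒬 > 0`, `𝒩 ≠ 𝒬`, `N_v + 1 > 0`, a point with `R ≠ N_v + 1` has all three
partial derivatives zero iff it is one of the two explicit points. -/
theorem lagrange_stationary_points (𝒩 𝒬 Nv : ℝ) (h𝒩 : 0 < 𝒩) (h𝒬 : 0 < 𝒬)
    (hne : 𝒩 ≠ 𝒬) (hNv : 0 < Nv + 1)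
    (F : ℝ → ℝ → ℝ → ℝ)
    (hF : ∀ L R lam, F L R lam = 𝒩 / (Nv - R + 1) + L - 1 + lam * (L * R - 𝒬))
    (L R lam : ℝ) (hR : R ≠ Nv + 1) :
    (deriv (fun L' => F L' R lam) L = 0 ∧
        deriv (fun R' => F L R' lam) R = 0 ∧
        deriv (fun l => F L R l) lam = 0) ↔
      ((L, R, lam) =
          (Real.sqrt 𝒬 * (Real.sqrt 𝒩 + Real.sqrt 𝒬) / (Nv + 1),
           Real.sqrt 𝒬 * (Nv + 1) / (Real.sqrt 𝒩 + Real.sqrt 𝒬),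
           -1 / (Real.sqrt 𝒬 * (Nv + 1) / (Real.sqrt 𝒩 + Real.sqrt 𝒬))) ∨
        (L, R, lam) =
          (Real.sqrt 𝒬 * (Real.sqrt 𝒬 - Real.sqrt 𝒩) / (Nv + 1),
           Real.sqrt 𝒬 * (Nv + 1) / (Real.sqrt 𝒬 - Real.sqrt 𝒩),
           -1 / (Real.sqrt 𝒬 * (Nv + 1) / (Real.sqrt 𝒬 - Real.sqrt 𝒩)))) := by
  have hden : Nv - R + 1 ≠ 0 := fun h => hR (by linarith)
  set a := Real.sqrt 𝒩 with ha
  set b := Real.sqrt 𝒬 with hb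
  have ha2 : a ^ 2 = 𝒩 := Real.sq_sqrt h𝒩.le
  have hb2 : b ^ 2 = 𝒬 := Real.sq_sqrt h𝒬.le
  have hapos : 0 < a := Real.sqrt_pos.mpr h𝒩
  have hbpos : 0 < b := Real.sqrt_pos.mpr h𝒬
  have hab : a ≠ b := fun h => hne (by rw [← ha2, ← hb2, h])
  have habne : a + b ≠ 0 := by positivity
  have hbane : b - a ≠ 0 := sub_ne_zero.mpr (Ne.symm hab)
  have hN1 : Nv + 1 ≠ 0 := ne_of_gt hNv
  -- compute the three derivatives
  have h1 : deriv (fun L' => F L' R lam) L = 1 + lam * R := by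
    have hfun : (fun L' => F L' R lam)
        = fun L' => 𝒩 / (Nv - R + 1) + L' - 1 + lam * (L' * R - 𝒬) :=
      funext fun L' => hF L' R lam
    rw [hfun]
    have hd : HasDerivAt
        (fun L' : ℝ => 𝒩 / (Nv - R + 1) + L' - 1 + lam * (L' * R - 𝒬))
        (1 + lam * R) L := by
      have h := (((hasDerivAt_id L).const_add (𝒩 / (Nv - R + 1))).sub_const 1).add
        ((((hasDerivAt_id L).mul_const R).sub_const 𝒬).const_mul lam)
      exact h.congr_deriv (by ring)
    exact hd.deriv
  have h2 : deriv (fun R' => F L R' lam) R = 𝒩 / (Nv - R + 1) ^ 2 + lam * L := by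
    have hfun : (fun R' => F L R' lam)
        = fun R' => 𝒩 / (Nv - R' + 1) + L - 1 + lam * (L * R' - 𝒬) :=
      funext fun R' => hF L R' lam
    rw [hfun]
    have hg : HasDerivAt (fun R' : ℝ => Nv - R' + 1) (-1) R := by
      have h := ((hasDerivAt_id R).const_sub Nv).add_const 1
      exact h.congr_deriv (by ring)
    have hq : HasDerivAt (fun R' : ℝ => 𝒩 / (Nv - R' + 1))
        ((0 * (Nv - R + 1) - 𝒩 * (-1)) / (Nv - R + 1) ^ 2) R :=
      (hasDerivAt_const R 𝒩).div hg hden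
    have hd : HasDerivAt
        (fun R' : ℝ => 𝒩 / (Nv - R' + 1) + L - 1 + lam * (L * R' - 𝒬))
        (𝒩 / (Nv - R + 1) ^ 2 + lam * L) R := by
      have h := ((hq.add_const L).sub_const 1).add
        ((((hasDerivAt_id R).const_mul L).sub_const 𝒬).const_mul lam)
      exact h.congr_deriv (by ring)
    exact hd.deriv
  have h3 : deriv (fun l => F L R l) lam = L * R - 𝒬 := by
    have hfun : (fun l => F L R l)
        = fun l => 𝒩 / (Nv - R + 1) + L - 1 + l * (L * R - 𝒬) :=
      funext fun l => hF L R l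
    rw [hfun]
    have hd : HasDerivAt
        (fun l : ℝ => 𝒩 / (Nv - R + 1) + L - 1 + l * (L * R - 𝒬))
        (L * R - 𝒬) lam := by
      have h := (((hasDerivAt_id lam).mul_const (L * R - 𝒬)).const_add
        (𝒩 / (Nv - R + 1) + L - 1))
      simpa using h
    exact hd.deriv
  rw [h1, h2, h3]
  constructor
  · rintro ⟨e1, e2, e3⟩
    have hRne : R ≠ 0 := by
      intro h; rw [h] at e1; simp at e1
    have hLR : L * R = 𝒬 := by linarith
    have hlam : lam = -1 / R := by
      field_simp
      linarith
    -- from e2: 𝒩 * R ^ 2 = 𝒬 * (Nv - R + 1) ^ 2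
    have hL : L = 𝒬 / R := by field_simp [mul_comm] at hLR ⊢; linarith
    have key : 𝒩 * R ^ 2 = 𝒬 * (Nv - R + 1) ^ 2 := by
      rw [hL, hlam] at e2
      field_simp at e2
      nlinarith [sq_nonneg (Nv - R + 1), e2]
    have hfact : (a * R - b * (Nv - R + 1)) * (a * R + b * (Nv - R + 1)) = 0 := by
      nlinarith [key, ha2, hb2]
    rcases mul_eq_zero.mp hfact with hc | hc
    · left
      have hRval : R = b * (Nv + 1) / (a + b) := by
        field_simp
        linarith
      have hLval : L = b * (a + b) / (Nv + 1) := by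
        rw [hL, hRval, ← hb2]
        field_simp
      have hlamval : lam = -1 / (b * (Nv + 1) / (a + b)) := by
        rw [hlam, hRval]
      rw [Prod.ext_iff, Prod.ext_iff]
      exact ⟨hLval, hRval, hlamval⟩
    · right
      have hRval : R = b * (Nv + 1) / (b - a) := by
        field_simp
        linarith
      have hLval : L = b * (b - a) / (Nv + 1) := by
        rw [hL, hRval, ← hb2]
        field_simp
      have hlamval : lam = -1 / (b * (Nv + 1) / (b - a)) := by
        rw [hlam, hRval]
      rw [Prod.ext_iff, Prod.ext_iff]
      exact ⟨hLval, hRval, hlamval⟩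
  · rintro (h | h) <;> rw [Prod.ext_iff, Prod.ext_iff] at h <;>
      obtain ⟨hL, hRv, hlv⟩ := h <;> subst hL <;> subst hlv
    · have hRpos : R = b * (Nv + 1) / (a + b) := hRv
      refine ⟨?_, ?_, ?_⟩
      · rw [hRpos]; field_simp; ring
      · rw [hRpos] at hden ⊢
        have hd2 : Nv - b * (Nv + 1) / (a + b) + 1 = a * (Nv + 1) / (a + b) := by
          field_simp; ring
        rw [hd2, ← ha2]
        field_simp
        ring
      · rw [hRpos, ← hb2]
        field_simp
        ring
    · have hRpos : R = b * (Nv + 1) / (b - a) := hRv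
      refine ⟨?_, ?_, ?_⟩
      · rw [hRpos]; field_simp; ring
      · rw [hRpos] at hden ⊢
        have hd2 : Nv - b * (Nv + 1) / (b - a) + 1 = -(a * (Nv + 1)) / (b - a) := by
          field_simp; ring
        rw [hd2, ← ha2]
        field_simp
        ring
      · rw [hRpos, ← hb2]
        field_simp
        ring
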